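/- arXiv:2201.08576 — 2 statements merged into one kernel-verified Lean document; each statement's English description precedes it below -/
import Mathlib

section
/- Let p be a point sphere complex, s̄ an isotropic vector (a curvature sphere), and q̄ an isotropic vector with ⟨q̄, s̄ + ⟨s̄,p⟩p⟩ = 0 (a sphere intersecting s̄ orthogonally, i.e. a quer-sphere along the curvature circle in which s̄ and q̄ intersect). Let m₁, m₂ be linearly independent point spheres with ⟨m_i, s̄⟩ = 0 and ⟨m_i, q̄⟩ = 0 for i = 1, 2 (two points of that curvature circle). Then the 2-ortho-circle γ := span{m₁, m₂, s̄ + ⟨s̄,p⟩p} through m₁ and m₂ orthogonal to s̄ lies on the quer-sphere q̄: ⟨q̄, x⟩ = 0 for every x ∈ γ, so in particular every point sphere of γ lies on q̄. Hence all 2-ortho-circles that orthogonally intersect the same curvature circle lie on a common sphere, namely the corresponding quer-sphere. -/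
noncomputable section

/-- The symmetric bilinear form of signature (4,2) on ℝ⁶, modelling ℝ^{4,2}. -/
def B (x y : Fin 6 → ℝ) : ℝ :=
  x 0 * y 0 + x 1 * y 1 + x 2 * y 2 + x 3 * y 3 - x 4 * y 4 - x 5 * y 5

lemma B_add_right (q x y : Fin 6 → ℝ) : B q (x + y) = B q x + B q y := by
  simp [B]; ring

lemma B_smul_right (q : Fin 6 → ℝ) (c : ℝ) (x : Fin 6 → ℝ) : B q (c • x) = c * B q x := by
  simp [B]; ring

lemma B_comm (x y : Fin 6 → ℝ) : B x y = B y x := by simp [B]; ring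

/-- A 2-ortho-circle `γ = span{m₁, m₂, s + ⟨s,p⟩p}` through
two points `m₁, m₂` of a curvature circle (cut out by the curvature sphere `s`
and a quer-sphere `q`) lies on the quer-sphere `q`: every element of `γ` is
orthogonal to `q`. -/
theorem stmt_9 (p s q m₁ m₂ : Fin 6 → ℝ) (hp : B p p = -1)
    (hs : s ≠ 0) (is0 : B s s = 0) (hq : q ≠ 0) (iq : B q q = 0)
    (horth : B q (s + B s p • p) = 0)
    (hm₁ : m₁ ≠ 0) (im₁ : B m₁ m₁ = 0) (hm₁p : B m₁ p = 0)
    (hm₂ : m₂ ≠ 0) (im₂ : B m₂ m₂ = 0) (hm₂p : B m₂ p = 0)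
    (hind : LinearIndependent ℝ ![m₁, m₂])
    (h₁s : B m₁ s = 0) (h₁q : B m₁ q = 0)
    (h₂s : B m₂ s = 0) (h₂q : B m₂ q = 0) :
    ∀ x ∈ Submodule.span ℝ ({m₁, m₂, s + B s p • p} : Set (Fin 6 → ℝ)),
      B q x = 0 := by
  intro x hx
  induction hx using Submodule.span_induction with
  | mem y hy =>
    rcases hy with rfl | rfl | rfl
    · rw [B_comm]; exact h₁q
    · rw [B_comm]; exact h₂q
    · exact horth
  | zero => simp [B]
  | add y z _ _ hy hz => rw [B_add_right, hy, hz, add_zero]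
  | smul c y _ hy => rw [B_smul_right, hy, mul_zero]
end
end

section
/- Let p be a point sphere complex, σ_a an M-Lie inversion (i.e. ⟨a,a⟩ ≠ 0 and ⟨a,p⟩ = 0), and let x₁, x₂ be point spheres (isotropic vectors with ⟨x₁,p⟩ = ⟨x₂,p⟩ = 0). Then the four point spheres x₁, x₂, σ_a(x₁), σ_a(x₂) all lie in the subspace span{x₁, x₂, a}, which has dimension at most 3 and is orthogonal to p. Hence four point spheres related pairwise by an M-Lie inversion lie in a 3-dimensional subspace orthogonal to p and are therefore concircular. -/
noncomputable section

/-- The Lie inversion with respect to the linear sphere complex `a`. -/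
def lieInv (a x : Fin 6 → ℝ) : Fin 6 → ℝ :=
  x - (2 * B x a / B a a) • a

lemma B_add_left (x y z : Fin 6 → ℝ) : B (x + y) z = B x z + B y z := by
  simp [B, Pi.add_apply]; ring

lemma B_smul_left (c : ℝ) (x z : Fin 6 → ℝ) : B (c • x) z = c * B x z := by
  simp [B, Pi.smul_apply, smul_eq_mul]; ring

lemma B_zero_left (z : Fin 6 → ℝ) : B 0 z = 0 := by show (0:ℝ)*z 0 + 0*z 1 + 0*z 2 + 0*z 3 - 0*z 4 - 0*z 5 = 0; ring

lemma finrank_span_single_le (v : Fin 6 → ℝ) :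
    Module.finrank ℝ (Submodule.span ℝ ({v} : Set (Fin 6 → ℝ))) ≤ 1 := by
  by_cases h : v = 0
  · rw [h, Submodule.span_zero_singleton]; simp
  · rw [finrank_span_singleton h]

/-- For an M-Lie inversion `σ_a` and point spheres `x₁, x₂`,
the four point spheres `x₁, x₂, σ_a(x₁), σ_a(x₂)` lie in the subspace
`span{x₁, x₂, a}`, which has dimension at most 3 and is orthogonal to `p`;
hence the four point spheres are concircular. -/
theorem stmt_13 (p a x₁ x₂ : Fin 6 → ℝ) (hp : B p p = -1)
    (ha : B a a ≠ 0) (hap : B a p = 0)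
    (hx₁ : x₁ ≠ 0) (ix₁ : B x₁ x₁ = 0) (hx₁p : B x₁ p = 0)
    (hx₂ : x₂ ≠ 0) (ix₂ : B x₂ x₂ = 0) (hx₂p : B x₂ p = 0)
    (W : Submodule ℝ (Fin 6 → ℝ))
    (hW : W = Submodule.span ℝ ({x₁, x₂, a} : Set (Fin 6 → ℝ))) :
    x₁ ∈ W ∧ x₂ ∈ W ∧ lieInv a x₁ ∈ W ∧ lieInv a x₂ ∈ W ∧
    Module.finrank ℝ W ≤ 3 ∧ (∀ x ∈ W, B x p = 0) := by
  subst hW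
  have h1 : x₁ ∈ Submodule.span ℝ ({x₁, x₂, a} : Set (Fin 6 → ℝ)) :=
    Submodule.subset_span (by simp)
  have h2 : x₂ ∈ Submodule.span ℝ ({x₁, x₂, a} : Set (Fin 6 → ℝ)) :=
    Submodule.subset_span (by simp)
  have h3 : a ∈ Submodule.span ℝ ({x₁, x₂, a} : Set (Fin 6 → ℝ)) :=
    Submodule.subset_span (by simp)
  refine ⟨h1, h2, ?_, ?_, ?_, ?_⟩
  · exact Submodule.sub_mem _ h1 (Submodule.smul_mem _ _ h3)
  · exact Submodule.sub_mem _ h2 (Submodule.smul_mem _ _ h3)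
  · have hsplit : ({x₁, x₂, a} : Set (Fin 6 → ℝ)) = {x₁} ∪ ({x₂} ∪ {a}) := by
      rw [Set.insert_eq, Set.insert_eq]
    rw [hsplit, Submodule.span_union, Submodule.span_union]
    calc Module.finrank ℝ ↥(Submodule.span ℝ {x₁} ⊔
          (Submodule.span ℝ {x₂} ⊔ Submodule.span ℝ {a}))
        ≤ Module.finrank ℝ (Submodule.span ℝ ({x₁} : Set (Fin 6 → ℝ))) +
          Module.finrank ℝ ↥(Submodule.span ℝ ({x₂} : Set (Fin 6 → ℝ)) ⊔
            Submodule.span ℝ ({a} : Set (Fin 6 → ℝ))) :=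
          Submodule.finrank_add_le_finrank_add_finrank _ _
      _ ≤ 1 + (Module.finrank ℝ (Submodule.span ℝ ({x₂} : Set (Fin 6 → ℝ))) +
            Module.finrank ℝ (Submodule.span ℝ ({a} : Set (Fin 6 → ℝ)))) :=
          add_le_add (finrank_span_single_le _)
            (Submodule.finrank_add_le_finrank_add_finrank _ _)
      _ ≤ 1 + (1 + 1) :=
          add_le_add le_rfl (add_le_add (finrank_span_single_le _) (finrank_span_single_le _))
      _ = 3 := rfl
  · intro x hx
    induction hx using Submodule.span_induction with
    | mem y hy =>
        rcases hy with rfl | rfl | rfl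
        · exact hx₁p
        · exact hx₂p
        · exact hap
    | zero => exact B_zero_left p
    | add y z _ _ hy hz => rw [B_add_left, hy, hz, add_zero]
    | smul c y _ hy => rw [B_smul_left, hy, mul_zero]
end
end
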